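/- For every integer g with g > 28, the images of a₂′⁴ and a₃′² in Q(g) form a ℚ-basis of the weighted-degree-4 component Q(g)_4; in particular dim_ℚ Q(g)_4 = 2. -/

import Mathlib

open MvPolynomial

noncomputable section

/-- The polynomial ring `ℚ[a₁, a₂′, a₃′]`. -/
abbrev R3 : Type := MvPolynomial (Fin 3) ℚ

/-- Weights: `a₁` and `a₂′` have weight 1, `a₃′` has weight 2. -/
def wt : Fin 3 → ℕ := ![1, 1, 2]

def a1 : R3 := X 0
def a2' : R3 := X 1
def a3' : R3 := X 2

/-- The relation `r₁`. -/
def r1 (g : ℤ) : R3 :=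
  C (2*(g:ℚ)^3 + 9*(g:ℚ)^2 + 10*(g:ℚ)) * a1^3
    - C (8*(g:ℚ)^2 + 24*(g:ℚ) + 8) * (a1 * a3')

/-- The relation `r₂`. -/
def r2 (g : ℤ) : R3 :=
  C (12*(g:ℚ)^3 + 42*(g:ℚ)^2 + 36*(g:ℚ)) * (a1^2 * a2')
    - C (22*(g:ℚ)^3 + 121*(g:ℚ)^2 + 187*(g:ℚ) + 66) * (a1 * a3')
    - C (24*(g:ℚ)^2 + 24*(g:ℚ)) * (a2' * a3')

/-- The relation `r₃`. -/
def r3 (g : ℤ) : R3 :=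
  C (432*(g:ℚ)^3 + 1512*(g:ℚ)^2 + 1296*(g:ℚ)) * (a1 * a2'^2)
    - C (1450*(g:ℚ)^3 + 8001*(g:ℚ)^2 + 13115*(g:ℚ) + 5442) * (a1 * a3')
    - C (1584*(g:ℚ)^3 + 5544*(g:ℚ)^2 + 3936*(g:ℚ)) * (a2' * a3')

/-- The relation `r₄`. -/
def r4 (g : ℤ) : R3 :=
  C (14344*(g:ℚ)^6 + 165692*(g:ℚ)^5 + 747682*(g:ℚ)^4 + 1636869*(g:ℚ)^3
      + 1719009*(g:ℚ)^2 + 677844*(g:ℚ) - 540) * (a1^2 * a3')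
    - C (17280*(g:ℚ)^4 + 112320*(g:ℚ)^3 + 224640*(g:ℚ)^2 + 129600*(g:ℚ)) * (a2'^2 * a3')
    + C (352*(g:ℚ)^5 + 1440*(g:ℚ)^4 + 1448*(g:ℚ)^3 + 120*(g:ℚ)^2) * (a3'^2)

/-- The ideal `I(g) = (r₁, r₂, r₃, r₄)`. -/
def Ig (g : ℤ) : Ideal R3 := Ideal.span {r1 g, r2 g, r3 g, r4 g}

/-- The quotient map `R → Q(g) = R/I(g)`, as a `ℚ`-linear map. -/
def Qmk (g : ℤ) : R3 →ₗ[ℚ] R3 ⧸ Ig g := (Ideal.Quotient.mkₐ ℚ (Ig g)).toLinearMap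

/-- `Q(g)_i`: the image in `Q(g)` of the weighted-degree-`i` homogeneous polynomials. -/
def QComp (g : ℤ) (i : ℕ) : Submodule ℚ (R3 ⧸ Ig g) :=
  (weightedHomogeneousSubmodule ℚ wt i).map (Qmk g)

/-- For `g > 28`, the images of `a₂′⁴` and `a₃′²` form a `ℚ`-basis of `Q(g)_4`;
in particular `dim_ℚ Q(g)_4 = 2`. -/

def ee (a b c : ℕ) : Fin 3 →₀ ℕ :=
  Finsupp.single 0 a + Finsupp.single 1 b + Finsupp.single 2 c

lemma ee_le_ee {a b c a' b' c' : ℕ} :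
    ee a' b' c' ≤ ee a b c ↔ a' ≤ a ∧ b' ≤ b ∧ c' ≤ c := by
  simp [ee, Finsupp.le_def, Fin.forall_fin_succ, Finsupp.single_apply]

lemma ee_sub {a b c a' b' c' : ℕ} :
    ee a b c - ee a' b' c' = ee (a - a') (b - b') (c - c') := by
  ext i; fin_cases i <;> simp [ee, Finsupp.single_apply]

lemma ee_eq_ee {a b c a' b' c' : ℕ} :
    ee a b c = ee a' b' c' ↔ a = a' ∧ b = b' ∧ c = c' := by
  constructor
  · intro h
    have h0 := congrArg (fun f => f 0) h
    have h1 := congrArg (fun f => f 1) h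
    have h2 := congrArg (fun f => f 2) h
    simp [ee, Finsupp.single_apply] at h0 h1 h2
    exact ⟨h0, h1, h2⟩
  · rintro ⟨rfl, rfl, rfl⟩; rfl

lemma ee_self (d : Fin 3 →₀ ℕ) : d = ee (d 0) (d 1) (d 2) := by
  ext i; fin_cases i <;> simp [ee, Finsupp.single_apply]

lemma mono_eq (p q s : ℕ) (c : ℚ) :
    (monomial (ee p q s) c : R3) = C c * a1 ^ p * a2' ^ q * a3' ^ s := by
  simp only [a1, a2', a3', X_pow_eq_monomial, C_mul_monomial, monomial_mul, mul_one, one_mul, ee]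

def lam1 : R3 →ₗ[ℚ] ℚ where
  toFun p := coeff (ee 0 4 0) p
  map_add' p q := by simp [coeff_add]
  map_smul' c p := by simp [coeff_smul]

@[simp] lemma lam1_apply (p : R3) : lam1 p = coeff (ee 0 4 0) p := rfl

def lam2 (g : ℤ) : R3 →ₗ[ℚ] ℚ where
  toFun p := (124416*(g:ℚ) + 373248*(g:ℚ)^2 + 124416*(g:ℚ)^3) * coeff (ee 4 0 0) p + (285120*(g:ℚ) + 969408*(g:ℚ)^2 + 627264*(g:ℚ)^3 + 114048*(g:ℚ)^4) * coeff (ee 3 1 0) p + (653040*(g:ℚ) + 2482056*(g:ℚ)^2 + 2325456*(g:ℚ)^3 + 836208*(g:ℚ)^4 + 104544*(g:ℚ)^5) * coeff (ee 2 2 0) p + (1494910*(g:ℚ) + 6282059*(g:ℚ)^2 + 7599838*(g:ℚ)^3 + 4046130*(g:ℚ)^4 + 1005840*(g:ℚ)^5 + 95832*(g:ℚ)^6) * coeff (ee 1 3 0) p + (155520*(g:ℚ)^2 + 139968*(g:ℚ)^3 + 31104*(g:ℚ)^4) * coeff (ee 2 0 1) p + (356400*(g:ℚ)^2 + 463320*(g:ℚ)^3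 + 199584*(g:ℚ)^4 + 28512*(g:ℚ)^5) * coeff (ee 1 1 1) p + ((-540)*(g:ℚ) + 815364*(g:ℚ)^2 + 1387197*(g:ℚ)^3 + 881586*(g:ℚ)^4 + 248220*(g:ℚ)^5 + 26136*(g:ℚ)^6) * coeff (ee 0 2 1) p + (116640 + 318816*(g:ℚ) + 449064*(g:ℚ)^2 + 330480*(g:ℚ)^3 + 116640*(g:ℚ)^4 + 15552*(g:ℚ)^5) * coeff (ee 0 0 2) p
  map_add' p q := by simp only [coeff_add]; ring
  map_smul' c p := by simp only [coeff_smul, RingHom.id_apply, smul_eq_mul]; ring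

@[simp] lemma lam2_apply (g : ℤ) (p : R3) : lam2 g p = (124416*(g:ℚ) + 373248*(g:ℚ)^2 + 124416*(g:ℚ)^3) * coeff (ee 4 0 0) p + (285120*(g:ℚ) + 969408*(g:ℚ)^2 + 627264*(g:ℚ)^3 + 114048*(g:ℚ)^4) * coeff (ee 3 1 0) p + (653040*(g:ℚ) + 2482056*(g:ℚ)^2 + 2325456*(g:ℚ)^3 + 836208*(g:ℚ)^4 + 104544*(g:ℚ)^5) * coeff (ee 2 2 0) p + (1494910*(g:ℚ) + 6282059*(g:ℚ)^2 + 7599838*(g:ℚ)^3 + 4046130*(g:ℚ)^4 + 1005840*(g:ℚ)^5 + 95832*(g:ℚ)^6) * coeff (ee 1 3 0) p + (155520*(g:ℚ)^2 + 139968*(g:ℚ)^3 + 31104*(g:ℚ)^4) * coeff (ee 2 0 1) p + (356400*(g:ℚ)^2 + 463320*(g:ℚ)^3 + 199584*(g:ℚ)^4 + 28512*(g:ℚ)^5) * coeff (ee 1 1 1) p + ((-540)*(g:ℚ) + 815364*(g:ℚ)^2 + 1387197*(g:ℚ)^3 + 881586*(g:ℚ)^4 + 248220*(g:ℚ)^5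 + 26136*(g:ℚ)^6) * coeff (ee 0 2 1) p + (116640 + 318816*(g:ℚ) + 449064*(g:ℚ)^2 + 330480*(g:ℚ)^3 + 116640*(g:ℚ)^4 + 15552*(g:ℚ)^5) * coeff (ee 0 0 2) p := rfl


lemma r1_mono (g : ℤ) : r1 g = monomial (ee 3 0 0) (2*(g:ℚ)^3 + 9*(g:ℚ)^2 + 10*(g:ℚ)) - monomial (ee 1 0 1) (8*(g:ℚ)^2 + 24*(g:ℚ) + 8) := by
  simp only [r1, mono_eq]; ring


lemma lam1_r1 (g : ℤ) (f : R3) : lam1 (f * r1 g) = 0 := by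
  rw [r1_mono]
  simp only [mul_sub, mul_add]
  simp only [lam1_apply, coeff_sub, coeff_add, coeff_mul_monomial', ee_le_ee, ee_sub]
  norm_num
  try ring


lemma lam2_r1 (g : ℤ) (f : R3) : lam2 g (f * r1 g) = 0 := by
  rw [r1_mono]
  simp only [mul_sub, mul_add]
  simp only [lam2_apply, coeff_sub, coeff_add, coeff_mul_monomial', ee_le_ee, ee_sub]
  norm_num
  try ring


lemma r2_mono (g : ℤ) : r2 g = monomial (ee 2 1 0) (12*(g:ℚ)^3 + 42*(g:ℚ)^2 + 36*(g:ℚ)) - monomial (ee 1 0 1) (22*(g:ℚ)^3 + 121*(g:ℚ)^2 + 187*(g:ℚ) + 66) - monomial (ee 0 1 1) (24*(g:ℚ)^2 + 24*(g:ℚ)) := by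
  simp only [r2, mono_eq]; ring


lemma lam1_r2 (g : ℤ) (f : R3) : lam1 (f * r2 g) = 0 := by
  rw [r2_mono]
  simp only [mul_sub, mul_add]
  simp only [lam1_apply, coeff_sub, coeff_add, coeff_mul_monomial', ee_le_ee, ee_sub]
  norm_num
  try ring


lemma lam2_r2 (g : ℤ) (f : R3) : lam2 g (f * r2 g) = 0 := by
  rw [r2_mono]
  simp only [mul_sub, mul_add]
  simp only [lam2_apply, coeff_sub, coeff_add, coeff_mul_monomial', ee_le_ee, ee_sub]
  norm_num
  try ring


lemma r3_mono (g : ℤ) : r3 g = monomial (ee 1 2 0) (432*(g:ℚ)^3 + 1512*(g:ℚ)^2 + 1296*(g:ℚ)) - monomial (ee 1 0 1) (1450*(g:ℚ)^3 + 8001*(g:ℚ)^2 + 13115*(g:ℚ) + 5442) - monomial (ee 0 1 1) (1584*(g:ℚ)^3 + 5544*(g:ℚ)^2 + 3936*(g:ℚ)) := by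
  simp only [r3, mono_eq]; ring


lemma lam1_r3 (g : ℤ) (f : R3) : lam1 (f * r3 g) = 0 := by
  rw [r3_mono]
  simp only [mul_sub, mul_add]
  simp only [lam1_apply, coeff_sub, coeff_add, coeff_mul_monomial', ee_le_ee, ee_sub]
  norm_num
  try ring


lemma lam2_r3 (g : ℤ) (f : R3) : lam2 g (f * r3 g) = 0 := by
  rw [r3_mono]
  simp only [mul_sub, mul_add]
  simp only [lam2_apply, coeff_sub, coeff_add, coeff_mul_monomial', ee_le_ee, ee_sub]
  norm_num
  try ring


lemma r4_mono (g : ℤ) : r4 g = monomial (ee 2 0 1) (14344*(g:ℚ)^6 + 165692*(g:ℚ)^5 + 747682*(g:ℚ)^4 + 1636869*(g:ℚ)^3 + 1719009*(g:ℚ)^2 + 677844*(g:ℚ) - 540) - monomial (ee 0 2 1) (17280*(g:ℚ)^4 + 112320*(g:ℚ)^3 + 224640*(g:ℚ)^2 + 129600*(g:ℚ)) + monomial (ee 0 0 2) (352*(g:ℚ)^5 + 1440*(g:ℚ)^4 + 1448*(g:ℚ)^3 + 120*(g:ℚ)^2) := by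
  simp only [r4, mono_eq]; ring


lemma lam1_r4 (g : ℤ) (f : R3) : lam1 (f * r4 g) = 0 := by
  rw [r4_mono]
  simp only [mul_sub, mul_add]
  simp only [lam1_apply, coeff_sub, coeff_add, coeff_mul_monomial', ee_le_ee, ee_sub]
  norm_num
  try ring


lemma lam2_r4 (g : ℤ) (f : R3) : lam2 g (f * r4 g) = 0 := by
  rw [r4_mono]
  simp only [mul_sub, mul_add]
  simp only [lam2_apply, coeff_sub, coeff_add, coeff_mul_monomial', ee_le_ee, ee_sub]
  norm_num
  try ring


lemma lam_ker (g : ℤ) {p : R3} (hp : p ∈ Ig g) : lam1 p = 0 ∧ lam2 g p = 0 := by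
  have hp' : p ∈ Ideal.span {r1 g, r2 g, r3 g, r4 g} := hp
  rcases Ideal.mem_span_insert.mp hp' with ⟨f1, p1, hp1, rfl⟩
  rcases Ideal.mem_span_insert.mp hp1 with ⟨f2, p2, hp2, rfl⟩
  rcases Ideal.mem_span_insert.mp hp2 with ⟨f3, p3, hp3, rfl⟩
  rcases Ideal.mem_span_singleton'.mp hp3 with ⟨f4, rfl⟩
  constructor <;>
  simp only [map_add, lam1_r1, lam1_r2, lam1_r3, lam1_r4,
    lam2_r1, lam2_r2, lam2_r3, lam2_r4, add_zero]

lemma Qmk_eq_zero_iff (g : ℤ) (p : R3) : Qmk g p = 0 ↔ p ∈ Ig g := by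
  simp only [Qmk, AlgHom.toLinearMap_apply, Ideal.Quotient.mkₐ_eq_mk]
  exact Ideal.Quotient.eq_zero_iff_mem

lemma y4_mono : (a2' ^ 4 : R3) = monomial (ee 0 4 0) 1 := by
  rw [mono_eq]; simp

lemma z2_mono : (a3' ^ 2 : R3) = monomial (ee 0 0 2) 1 := by
  rw [mono_eq]; simp

lemma indep (g : ℤ) (hg : g > 28) :
    LinearIndependent ℚ ![Qmk g (a2' ^ 4), Qmk g (a3' ^ 2)] := by
  have hgq : (29:ℚ) ≤ (g:ℚ) := by exact_mod_cast (by omega : (29:ℤ) ≤ g)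
  have h0 : (0:ℚ) < (g:ℚ) := by linarith
  rw [LinearIndependent.pair_iff]
  intro s t hst
  have hmem : s • a2' ^ 4 + t • a3' ^ 2 ∈ Ig g := by
    rw [← Qmk_eq_zero_iff]
    simpa only [map_add, map_smul] using hst
  obtain ⟨h1, h2⟩ := lam_ker g hmem
  simp only [map_add, map_smul, lam1_apply, lam2_apply, y4_mono, z2_mono,
    coeff_monomial, ee_eq_ee, smul_eq_mul] at h1 h2
  norm_num at h1 h2
  refine ⟨h1, ?_⟩
  rcases h2 with h2 | h2
  · exact h2

  have hc : (0:ℚ) < (116640 + 318816*(g:ℚ) + 449064*(g:ℚ)^2 + 330480*(g:ℚ)^3 + 116640*(g:ℚ)^4 + 15552*(g:ℚ)^5) := by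
    nlinarith [pow_pos h0 2, pow_pos h0 3, pow_pos h0 4, pow_pos h0 5]
  · linarith


lemma cert_mem (g : ℤ) (F1 F2 F3 F4 : R3) :
    F1 * r1 g + F2 * r2 g + F3 * r3 g + F4 * r4 g ∈ Ig g := by
  have h1 : r1 g ∈ Ig g := Ideal.subset_span (by simp)
  have h2 : r2 g ∈ Ig g := Ideal.subset_span (by simp)
  have h3 : r3 g ∈ Ig g := Ideal.subset_span (by simp)
  have h4 : r4 g ∈ Ig g := Ideal.subset_span (by simp)
  exact add_mem (add_mem (add_mem (Ideal.mul_mem_left _ _ h1)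
    (Ideal.mul_mem_left _ _ h2)) (Ideal.mul_mem_left _ _ h3))
    (Ideal.mul_mem_left _ _ h4)

lemma mem_span_of_cert (g : ℤ) (m : R3) (D n2 : ℚ) (hD : D ≠ 0)
    (h : C D * m - C n2 * a3' ^ 2 ∈ Ig g) :
    Qmk g m ∈ Submodule.span ℚ ({Qmk g (a2' ^ 4), Qmk g (a3' ^ 2)} : Set (R3 ⧸ Ig g)) := by
  have h0 : Qmk g (C D * m - C n2 * a3' ^ 2) = 0 := (Qmk_eq_zero_iff g _).mpr h
  rw [C_mul', C_mul', map_sub, map_smul, map_smul, sub_eq_zero] at h0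
  have : Qmk g m = (n2 / D) • Qmk g (a3' ^ 2) := by
    have := congrArg (fun x => D⁻¹ • x) h0
    simpa [smul_smul, inv_mul_cancel₀ hD, div_eq_inv_mul] using this
  rw [this]
  exact Submodule.smul_mem _ _ (Submodule.subset_span (by simp))


lemma span_m400 (g : ℤ) (hg : g > 28) :
    Qmk g (a1^4) ∈ Submodule.span ℚ ({Qmk g (a2' ^ 4), Qmk g (a3' ^ 2)} : Set (R3 ⧸ Ig g)) := by
  have hgq : (29:ℚ) ≤ (g:ℚ) := by exact_mod_cast (by omega : (29:ℤ) ≤ g)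
  have h0 : (0:ℚ) < (g:ℚ) := by linarith
  have hD : (0:ℚ) < (1800*(g:ℚ) + 31140*(g:ℚ)^2 + 156298*(g:ℚ)^3 + 399427*(g:ℚ)^4 + 631435*(g:ℚ)^5 + 658860*(g:ℚ)^6 + 459108*(g:ℚ)^7 + 210288*(g:ℚ)^8 + 60560*(g:ℚ)^9 + 9920*(g:ℚ)^10 + 704*(g:ℚ)^11) := by
    nlinarith [pow_pos h0 2, pow_pos h0 3, pow_pos h0 4, pow_pos h0 5, pow_pos h0 6, pow_pos h0 7, pow_pos h0 8, pow_pos h0 9, pow_pos h0 10, pow_pos h0 11]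
  refine mem_span_of_cert g _ _ (1920*(g:ℚ)^2 + 33728*(g:ℚ)^3 + 168704*(g:ℚ)^4 + 363008*(g:ℚ)^5 + 379200*(g:ℚ)^6 + 203392*(g:ℚ)^7 + 54016*(g:ℚ)^8 + 5632*(g:ℚ)^9) (ne_of_gt hD) ?_
  have key : C (1800*(g:ℚ) + 31140*(g:ℚ)^2 + 156298*(g:ℚ)^3 + 399427*(g:ℚ)^4 + 631435*(g:ℚ)^5 + 658860*(g:ℚ)^6 + 459108*(g:ℚ)^7 + 210288*(g:ℚ)^8 + 60560*(g:ℚ)^9 + 9920*(g:ℚ)^10 + 704*(g:ℚ)^11) * (a1^4) - C (1920*(g:ℚ)^2 + 33728*(g:ℚ)^3 + 168704*(g:ℚ)^4 + 363008*(g:ℚ)^5 + 379200*(g:ℚ)^6 + 203392*(g:ℚ)^7 + 54016*(g:ℚ)^8 + 5632*(g:ℚ)^9) * a3' ^ 2 =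
      (C (180 + 2952*(g:ℚ) + 12937*(g:ℚ)^2 + 27709*(g:ℚ)^3 + 35618*(g:ℚ)^4 + 28288*(g:ℚ)^5 + 13328*(g:ℚ)^6 + 3376*(g:ℚ)^7 + 352*(g:ℚ)^8) * a1 + C ((-712800) + (-3737520)*(g:ℚ) + (-6238560)*(g:ℚ)^2 + (-3390240)*(g:ℚ)^3 + 802320*(g:ℚ)^4 + 1502880*(g:ℚ)^5 + 538560*(g:ℚ)^6 + 63360*(g:ℚ)^7) * a2') * r1 g
      + (C (198000 + 985400*(g:ℚ) + 1491280*(g:ℚ)^2 + 640720*(g:ℚ)^3 + (-273320)*(g:ℚ)^4 + (-324400)*(g:ℚ)^5 + (-100320)*(g:ℚ)^6 + (-10560)*(g:ℚ)^7) * a1 + C (86400 + 538560*(g:ℚ) + 1180800*(g:ℚ)^2 + 1140480*(g:ℚ)^3 + 544320*(g:ℚ)^4 + 126720*(g:ℚ)^5 + 11520*(g:ℚ)^6) * a2') * r2 g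
      + (C ((-2400) + (-14960)*(g:ℚ) + (-32800)*(g:ℚ)^2 + (-31680)*(g:ℚ)^3 + (-15120)*(g:ℚ)^4 + (-3520)*(g:ℚ)^5 + (-320)*(g:ℚ)^6) * a1 + C 0 * a2') * r3 g
      + C ((-16) + (-88)*(g:ℚ) + (-152)*(g:ℚ)^2 + (-88)*(g:ℚ)^3 + (-16)*(g:ℚ)^4) * r4 g := by
    simp only [r1, r2, r3, r4, a1, a2', a3', map_add, map_sub, map_mul, map_pow,
      map_neg, map_one, map_zero, map_ofNat]
    ring
  rw [key]
  exact cert_mem g _ _ _ _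


lemma span_m310 (g : ℤ) (hg : g > 28) :
    Qmk g (a1^3 * a2') ∈ Submodule.span ℚ ({Qmk g (a2' ^ 4), Qmk g (a3' ^ 2)} : Set (R3 ⧸ Ig g)) := by
  have hgq : (29:ℚ) ≤ (g:ℚ) := by exact_mod_cast (by omega : (29:ℤ) ≤ g)
  have h0 : (0:ℚ) < (g:ℚ) := by linarith
  have hD : (0:ℚ) < (3240*(g:ℚ) + 55836*(g:ℚ)^2 + 277686*(g:ℚ)^3 + 701673*(g:ℚ)^4 + 1095570*(g:ℚ)^5 + 1126581*(g:ℚ)^6 + 771078*(g:ℚ)^7 + 345552*(g:ℚ)^8 + 96960*(g:ℚ)^9 + 15408*(g:ℚ)^10 + 1056*(g:ℚ)^11) := by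
    nlinarith [pow_pos h0 2, pow_pos h0 3, pow_pos h0 4, pow_pos h0 5, pow_pos h0 6, pow_pos h0 7, pow_pos h0 8, pow_pos h0 9, pow_pos h0 10, pow_pos h0 11]
  refine mem_span_of_cert g _ _ (7920*(g:ℚ)^2 + 141768*(g:ℚ)^3 + 742280*(g:ℚ)^4 + 1729376*(g:ℚ)^5 + 2063336*(g:ℚ)^6 + 1360392*(g:ℚ)^7 + 502480*(g:ℚ)^8 + 97504*(g:ℚ)^9 + 7744*(g:ℚ)^10) (ne_of_gt hD) ?_
  have key : C (3240*(g:ℚ) + 55836*(g:ℚ)^2 + 277686*(g:ℚ)^3 + 701673*(g:ℚ)^4 + 1095570*(g:ℚ)^5 + 1126581*(g:ℚ)^6 + 771078*(g:ℚ)^7 + 345552*(g:ℚ)^8 + 96960*(g:ℚ)^9 + 15408*(g:ℚ)^10 + 1056*(g:ℚ)^11) * (a1^3 * a2') - C (7920*(g:ℚ)^2 + 141768*(g:ℚ)^3 + 742280*(g:ℚ)^4 + 1729376*(g:ℚ)^5 + 2063336*(g:ℚ)^6 + 1360392*(g:ℚ)^7 + 502480*(g:ℚ)^8 + 97504*(g:ℚ)^9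 + 7744*(g:ℚ)^10) * a3' ^ 2 =
      (C 0 * a1 + C ((-2940300) + (-16397640)*(g:ℚ) + (-30877173)*(g:ℚ)^2 + (-22576266)*(g:ℚ)^3 + (-1375191)*(g:ℚ)^4 + 7279038*(g:ℚ)^5 + 4274172*(g:ℚ)^6 + 997608*(g:ℚ)^7 + 86592*(g:ℚ)^8) * a2') * r1 g
      + (C (816840 + 4338546*(g:ℚ) + 7513549*(g:ℚ)^2 + 4708960*(g:ℚ)^3 + (-226408)*(g:ℚ)^4 + (-1698137)*(g:ℚ)^5 + (-852582)*(g:ℚ)^6 + (-179724)*(g:ℚ)^7 + (-14344)*(g:ℚ)^8) * a1 + C (356400 + 2340360*(g:ℚ) + 5611320*(g:ℚ)^2 + 6328080*(g:ℚ)^3 + 3813480*(g:ℚ)^4 + 1271160*(g:ℚ)^5 + 221760*(g:ℚ)^6 + 15840*(g:ℚ)^7) * a2') * r2 g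
      + (C ((-9900) + (-65010)*(g:ℚ) + (-155870)*(g:ℚ)^2 + (-175780)*(g:ℚ)^3 + (-105930)*(g:ℚ)^4 + (-35310)*(g:ℚ)^5 + (-6160)*(g:ℚ)^6 + (-440)*(g:ℚ)^7) * a1 + C 0 * a2') * r3 g
      + C ((-66) + (-385)*(g:ℚ) + (-748)*(g:ℚ)^2 + (-572)*(g:ℚ)^3 + (-187)*(g:ℚ)^4 + (-22)*(g:ℚ)^5) * r4 g := by
    simp only [r1, r2, r3, r4, a1, a2', a3', map_add, map_sub, map_mul, map_pow,
      map_neg, map_one, map_zero, map_ofNat]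
    ring
  rw [key]
  exact cert_mem g _ _ _ _


lemma span_m220 (g : ℤ) (hg : g > 28) :
    Qmk g (a1^2 * a2'^2) ∈ Submodule.span ℚ ({Qmk g (a2' ^ 4), Qmk g (a3' ^ 2)} : Set (R3 ⧸ Ig g)) := by
  have hgq : (29:ℚ) ≤ (g:ℚ) := by exact_mod_cast (by omega : (29:ℤ) ≤ g)
  have h0 : (0:ℚ) < (g:ℚ) := by linarith
  have hD : (0:ℚ) < (233280*(g:ℚ) + 4020192*(g:ℚ)^2 + 19993392*(g:ℚ)^3 + 50520456*(g:ℚ)^4 + 78881040*(g:ℚ)^5 + 81113832*(g:ℚ)^6 + 55517616*(g:ℚ)^7 + 24879744*(g:ℚ)^8 + 6981120*(g:ℚ)^9 + 1109376*(g:ℚ)^10 + 76032*(g:ℚ)^11) := by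
    nlinarith [pow_pos h0 2, pow_pos h0 3, pow_pos h0 4, pow_pos h0 5, pow_pos h0 6, pow_pos h0 7, pow_pos h0 8, pow_pos h0 9, pow_pos h0 10, pow_pos h0 11]
  refine mem_span_of_cert g _ _ (1306080*(g:ℚ)^2 + 23902272*(g:ℚ)^3 + 131776136*(g:ℚ)^4 + 334214880*(g:ℚ)^5 + 454444440*(g:ℚ)^6 + 360545904*(g:ℚ)^7 + 172656144*(g:ℚ)^8 + 49243680*(g:ℚ)^9 + 7712320*(g:ℚ)^10 + 511104*(g:ℚ)^11) (ne_of_gt hD) ?_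
  have key : C (233280*(g:ℚ) + 4020192*(g:ℚ)^2 + 19993392*(g:ℚ)^3 + 50520456*(g:ℚ)^4 + 78881040*(g:ℚ)^5 + 81113832*(g:ℚ)^6 + 55517616*(g:ℚ)^7 + 24879744*(g:ℚ)^8 + 6981120*(g:ℚ)^9 + 1109376*(g:ℚ)^10 + 76032*(g:ℚ)^11) * (a1^2 * a2'^2) - C (1306080*(g:ℚ)^2 + 23902272*(g:ℚ)^3 + 131776136*(g:ℚ)^4 + 334214880*(g:ℚ)^5 + 454444440*(g:ℚ)^6 + 360545904*(g:ℚ)^7 + 172656144*(g:ℚ)^8 + 49243680*(g:ℚ)^9 + 7712320*(g:ℚ)^10 + 511104*(g:ℚ)^11) * a3' ^ 2 =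
      (C 0 * a1 + C ((-484882200) + (-2898491040)*(g:ℚ) + (-6175534014)*(g:ℚ)^2 + (-5763873690)*(g:ℚ)^3 + (-1721449836)*(g:ℚ)^4 + 1104402216*(g:ℚ)^5 + 1181501844*(g:ℚ)^6 + 444999720*(g:ℚ)^7 + 79752816*(g:ℚ)^8 + 5680224*(g:ℚ)^9) * a2') * r1 g
      + (C (134689500 + 769219200*(g:ℚ) + 1524667875*(g:ℚ)^2 + 1270801221*(g:ℚ)^3 + 271410106*(g:ℚ)^4 + (-296446260)*(g:ℚ)^5 + (-253275474)*(g:ℚ)^6 + (-86038700)*(g:ℚ)^7 + (-14238840)*(g:ℚ)^8 + (-946704)*(g:ℚ)^9) * a1 + C (58773600 + 409501440*(g:ℚ) + 1079937000*(g:ℚ)^2 + 1414036080*(g:ℚ)^3 + 1046597400*(g:ℚ)^4 + 461331360*(g:ℚ)^5 + 120468240*(g:ℚ)^6 + 17248320*(g:ℚ)^7 + 1045440*(g:ℚ)^8) * a2') * r2 g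
      + (C ((-1632420) + (-11372148)*(g:ℚ) + (-29986257)*(g:ℚ)^2 + (-39254754)*(g:ℚ)^3 + (-29043313)*(g:ℚ)^4 + (-12793824)*(g:ℚ)^5 + (-3337540)*(g:ℚ)^6 + (-477168)*(g:ℚ)^7 + (-28864)*(g:ℚ)^8) * a1 + C 0 * a2') * r3 g
      + C ((-10884) + (-67852)*(g:ℚ) + (-148779)*(g:ℚ)^2 + (-143707)*(g:ℚ)^3 + (-68592)*(g:ℚ)^4 + (-15970)*(g:ℚ)^5 + (-1452)*(g:ℚ)^6) * r4 g := by
    simp only [r1, r2, r3, r4, a1, a2', a3', map_add, map_sub, map_mul, map_pow,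
      map_neg, map_one, map_zero, map_ofNat]
    ring
  rw [key]
  exact cert_mem g _ _ _ _


lemma span_m130 (g : ℤ) (hg : g > 28) :
    Qmk g (a1 * a2'^3) ∈ Submodule.span ℚ ({Qmk g (a2' ^ 4), Qmk g (a3' ^ 2)} : Set (R3 ⧸ Ig g)) := by
  have hgq : (29:ℚ) ≤ (g:ℚ) := by exact_mod_cast (by omega : (29:ℤ) ≤ g)
  have h0 : (0:ℚ) < (g:ℚ) := by linarith
  have hD : (0:ℚ) < (16796160*(g:ℚ) + 306249984*(g:ℚ)^2 + 1728978048*(g:ℚ)^3 + 5076997056*(g:ℚ)^4 + 9316907712*(g:ℚ)^5 + 11519630784*(g:ℚ)^6 + 9837464256*(g:ℚ)^7 + 5788609920*(g:ℚ)^8 + 2293982208*(g:ℚ)^9 + 582515712*(g:ℚ)^10 + 85349376*(g:ℚ)^11 + 5474304*(g:ℚ)^12) := by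
    nlinarith [pow_pos h0 2, pow_pos h0 3, pow_pos h0 4, pow_pos h0 5, pow_pos h0 6, pow_pos h0 7, pow_pos h0 8, pow_pos h0 9, pow_pos h0 10, pow_pos h0 11, pow_pos h0 12]
  refine mem_span_of_cert g _ _ (215267040*(g:ℚ)^2 + 4241255616*(g:ℚ)^3 + 27326357240*(g:ℚ)^4 + 87095241048*(g:ℚ)^5 + 160772544264*(g:ℚ)^6 + 186409372152*(g:ℚ)^7 + 141690100704*(g:ℚ)^8 + 71771083248*(g:ℚ)^9 + 24033989056*(g:ℚ)^10 + 5114558592*(g:ℚ)^11 + 626985216*(g:ℚ)^12 + 33732864*(g:ℚ)^13) (ne_of_gt hD) ?_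
  have key : C (16796160*(g:ℚ) + 306249984*(g:ℚ)^2 + 1728978048*(g:ℚ)^3 + 5076997056*(g:ℚ)^4 + 9316907712*(g:ℚ)^5 + 11519630784*(g:ℚ)^6 + 9837464256*(g:ℚ)^7 + 5788609920*(g:ℚ)^8 + 2293982208*(g:ℚ)^9 + 582515712*(g:ℚ)^10 + 85349376*(g:ℚ)^11 + 5474304*(g:ℚ)^12) * (a1 * a2'^3) - C (215267040*(g:ℚ)^2 + 4241255616*(g:ℚ)^3 + 27326357240*(g:ℚ)^4 + 87095241048*(g:ℚ)^5 + 160772544264*(g:ℚ)^6 + 186409372152*(g:ℚ)^7 + 141690100704*(g:ℚ)^8 + 71771083248*(g:ℚ)^9 + 24033989056*(g:ℚ)^10 + 5114558592*(g:ℚ)^11 + 626985216*(g:ℚ)^12 + 33732864*(g:ℚ)^13) * a3' ^ 2 =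
      (C 0 * a1 + C ((-79909169760) + (-589582976904)*(g:ℚ) + (-1718457118920)*(g:ℚ)^2 + (-2565226781838)*(g:ℚ)^3 + (-2018748828924)*(g:ℚ)^4 + (-592185447726)*(g:ℚ)^5 + 338702083620*(g:ℚ)^6 + 420225943620*(g:ℚ)^7 + 194217394032*(g:ℚ)^8 + 48778143264*(g:ℚ)^9 + 6579378432*(g:ℚ)^10 + 374894784*(g:ℚ)^11) * a2') * r1 g
      + (C (22196991600 + 157853851380*(g:ℚ) + 437622518436*(g:ℚ)^2 + 611754329211*(g:ℚ)^3 + 437952542098*(g:ℚ)^4 + 96833021739*(g:ℚ)^5 + (-92840876862)*(g:ℚ)^6 + (-92469075722)*(g:ℚ)^7 + (-38994997152)*(g:ℚ)^8 + (-9132529920)*(g:ℚ)^9 + (-1159045536)*(g:ℚ)^10 + (-62482464)*(g:ℚ)^11) * a1 + C (9684891360 + 81033169824*(g:ℚ) + 276255907992*(g:ℚ)^2 + 508959780912*(g:ℚ)^3 + 569460461976*(g:ℚ)^4 + 410148309456*(g:ℚ)^5 + 194841899424*(g:ℚ)^6 + 60830823312*(g:ℚ)^7 + 12028265568*(g:ℚ)^8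 + 1367492544*(g:ℚ)^9 + 68162688*(g:ℚ)^10) * a2') * r2 g
      + (C ((-269024760) + (-2250921384)*(g:ℚ) + (-7673775222)*(g:ℚ)^2 + (-14137771692)*(g:ℚ)^3 + (-15818346166)*(g:ℚ)^4 + (-11393008596)*(g:ℚ)^5 + (-5412274984)*(g:ℚ)^6 + (-1689745092)*(g:ℚ)^7 + (-334118488)*(g:ℚ)^8 + (-37985904)*(g:ℚ)^9 + (-1893408)*(g:ℚ)^10) * a1 + C (12960 + 221184*(g:ℚ) + 1071720*(g:ℚ)^2 + 2593368*(g:ℚ)^3 + 3806136*(g:ℚ)^4 + 3583656*(g:ℚ)^5 + 2140992*(g:ℚ)^6 + 774144*(g:ℚ)^7 + 153216*(g:ℚ)^8 + 12672*(g:ℚ)^9) * a2') * r3 g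
      + C ((-1793892) + (-13697500)*(g:ℚ) + (-40909773)*(g:ℚ)^2 + (-62516998)*(g:ℚ)^3 + (-54302817)*(g:ℚ)^4 + (-27951466)*(g:ℚ)^5 + (-8452818)*(g:ℚ)^6 + (-1389168)*(g:ℚ)^7 + (-95832)*(g:ℚ)^8) * r4 g := by
    simp only [r1, r2, r3, r4, a1, a2', a3', map_add, map_sub, map_mul, map_pow,
      map_neg, map_one, map_zero, map_ofNat]
    ring
  rw [key]
  exact cert_mem g _ _ _ _


lemma span_m201 (g : ℤ) (hg : g > 28) :
    Qmk g (a1^2 * a3') ∈ Submodule.span ℚ ({Qmk g (a2' ^ 4), Qmk g (a3' ^ 2)} : Set (R3 ⧸ Ig g)) := by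
  have hgq : (29:ℚ) ≤ (g:ℚ) := by exact_mod_cast (by omega : (29:ℤ) ≤ g)
  have h0 : (0:ℚ) < (g:ℚ) := by linarith
  have hD : (0:ℚ) < (180 + 2952*(g:ℚ) + 12937*(g:ℚ)^2 + 27709*(g:ℚ)^3 + 35618*(g:ℚ)^4 + 28288*(g:ℚ)^5 + 13328*(g:ℚ)^6 + 3376*(g:ℚ)^7 + 352*(g:ℚ)^8) := by
    nlinarith [pow_pos h0 2, pow_pos h0 3, pow_pos h0 4, pow_pos h0 5, pow_pos h0 6, pow_pos h0 7, pow_pos h0 8]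
  refine mem_span_of_cert g _ _ (240*(g:ℚ)^2 + 3496*(g:ℚ)^3 + 10360*(g:ℚ)^4 + 10800*(g:ℚ)^5 + 4640*(g:ℚ)^6 + 704*(g:ℚ)^7) (ne_of_gt hD) ?_
  have key : C (180 + 2952*(g:ℚ) + 12937*(g:ℚ)^2 + 27709*(g:ℚ)^3 + 35618*(g:ℚ)^4 + 28288*(g:ℚ)^5 + 13328*(g:ℚ)^6 + 3376*(g:ℚ)^7 + 352*(g:ℚ)^8) * (a1^2 * a3') - C (240*(g:ℚ)^2 + 3496*(g:ℚ)^3 + 10360*(g:ℚ)^4 + 10800*(g:ℚ)^5 + 4640*(g:ℚ)^6 + 704*(g:ℚ)^7) * a3' ^ 2 =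
      (C 0 * a1 + C ((-89100) + (-199890)*(g:ℚ) + (-91050)*(g:ℚ)^2 + 49260*(g:ℚ)^3 + 43560*(g:ℚ)^4 + 7920*(g:ℚ)^5) * a2') * r1 g
      + (C (24750 + 48925*(g:ℚ) + 14885*(g:ℚ)^2 + (-13490)*(g:ℚ)^3 + (-8580)*(g:ℚ)^4 + (-1320)*(g:ℚ)^5) * a1 + C (10800 + 34920*(g:ℚ) + 32040*(g:ℚ)^2 + 11520*(g:ℚ)^3 + 1440*(g:ℚ)^4) * a2') * r2 g
      + (C ((-300) + (-970)*(g:ℚ) + (-890)*(g:ℚ)^2 + (-320)*(g:ℚ)^3 + (-40)*(g:ℚ)^4) * a1 + C 0 * a2') * r3 g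
      + C ((-2) + (-5)*(g:ℚ) + (-2)*(g:ℚ)^2) * r4 g := by
    simp only [r1, r2, r3, r4, a1, a2', a3', map_add, map_sub, map_mul, map_pow,
      map_neg, map_one, map_zero, map_ofNat]
    ring
  rw [key]
  exact cert_mem g _ _ _ _


lemma span_m111 (g : ℤ) (hg : g > 28) :
    Qmk g (a1 * a2' * a3') ∈ Submodule.span ℚ ({Qmk g (a2' ^ 4), Qmk g (a3' ^ 2)} : Set (R3 ⧸ Ig g)) := by
  have hgq : (29:ℚ) ≤ (g:ℚ) := by exact_mod_cast (by omega : (29:ℤ) ≤ g)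
  have h0 : (0:ℚ) < (g:ℚ) := by linarith
  have hD : (0:ℚ) < (2592 + 42336*(g:ℚ) + 183528*(g:ℚ)^2 + 387696*(g:ℚ)^3 + 490824*(g:ℚ)^4 + 381984*(g:ℚ)^5 + 174912*(g:ℚ)^6 + 42624*(g:ℚ)^7 + 4224*(g:ℚ)^8) := by
    nlinarith [pow_pos h0 2, pow_pos h0 3, pow_pos h0 4, pow_pos h0 5, pow_pos h0 6, pow_pos h0 7, pow_pos h0 8]
  refine mem_span_of_cert g _ _ (7920*(g:ℚ)^2 + 118008*(g:ℚ)^3 + 380336*(g:ℚ)^4 + 470360*(g:ℚ)^5 + 271920*(g:ℚ)^6 + 74272*(g:ℚ)^7 + 7744*(g:ℚ)^8) (ne_of_gt hD) ?_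
  have key : C (2592 + 42336*(g:ℚ) + 183528*(g:ℚ)^2 + 387696*(g:ℚ)^3 + 490824*(g:ℚ)^4 + 381984*(g:ℚ)^5 + 174912*(g:ℚ)^6 + 42624*(g:ℚ)^7 + 4224*(g:ℚ)^8) * (a1 * a2' * a3') - C (7920*(g:ℚ)^2 + 118008*(g:ℚ)^3 + 380336*(g:ℚ)^4 + 470360*(g:ℚ)^5 + 271920*(g:ℚ)^6 + 74272*(g:ℚ)^7 + 7744*(g:ℚ)^8) * a3' ^ 2 =
      (C 0 * a1 + C ((-2940624) + (-7581060)*(g:ℚ) + (-5216310)*(g:ℚ)^2 + 605262*(g:ℚ)^3 + 1963980*(g:ℚ)^4 + 734088*(g:ℚ)^5 + 86064*(g:ℚ)^6) * a2') * r1 g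
      + (C (816840 + 1888026*(g:ℚ) + 1032631*(g:ℚ)^2 + (-276959)*(g:ℚ)^3 + (-428162)*(g:ℚ)^4 + (-136692)*(g:ℚ)^5 + (-14344)*(g:ℚ)^6) * a1 + C (356400 + 1271160*(g:ℚ) + 1441440*(g:ℚ)^2 + 732600*(g:ℚ)^3 + 174240*(g:ℚ)^4 + 15840*(g:ℚ)^5) * a2') * r2 g
      + (C ((-9900) + (-35310)*(g:ℚ) + (-40040)*(g:ℚ)^2 + (-20350)*(g:ℚ)^3 + (-4840)*(g:ℚ)^4 + (-440)*(g:ℚ)^5) * a1 + C 0 * a2') * r3 g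
      + C ((-66) + (-187)*(g:ℚ) + (-121)*(g:ℚ)^2 + (-22)*(g:ℚ)^3) * r4 g := by
    simp only [r1, r2, r3, r4, a1, a2', a3', map_add, map_sub, map_mul, map_pow,
      map_neg, map_one, map_zero, map_ofNat]
    ring
  rw [key]
  exact cert_mem g _ _ _ _


lemma span_m021 (g : ℤ) (hg : g > 28) :
    Qmk g (a2'^2 * a3') ∈ Submodule.span ℚ ({Qmk g (a2' ^ 4), Qmk g (a3' ^ 2)} : Set (R3 ⧸ Ig g)) := by
  have hgq : (29:ℚ) ≤ (g:ℚ) := by exact_mod_cast (by omega : (29:ℤ) ≤ g)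
  have h0 : (0:ℚ) < (g:ℚ) := by linarith
  have hD : (0:ℚ) < (933120*(g:ℚ) + 16547328*(g:ℚ)^2 + 87780672*(g:ℚ)^3 + 238165056*(g:ℚ)^4 + 398523456*(g:ℚ)^5 + 440717760*(g:ℚ)^6 + 326166912*(g:ℚ)^7 + 158505984*(g:ℚ)^8 + 48190464*(g:ℚ)^9 + 8266752*(g:ℚ)^10 + 608256*(g:ℚ)^11) := by
    nlinarith [pow_pos h0 2, pow_pos h0 3, pow_pos h0 4, pow_pos h0 5, pow_pos h0 6, pow_pos h0 7, pow_pos h0 8, pow_pos h0 9, pow_pos h0 10, pow_pos h0 11]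
  refine mem_span_of_cert g _ _ ((-4320)*(g:ℚ)^2 + 6458112*(g:ℚ)^3 + 108728616*(g:ℚ)^4 + 494328872*(g:ℚ)^5 + 1045994280*(g:ℚ)^6 + 1238448792*(g:ℚ)^7 + 887175696*(g:ℚ)^8 + 393926208*(g:ℚ)^9 + 106179840*(g:ℚ)^10 + 15934336*(g:ℚ)^11 + 1022208*(g:ℚ)^12) (ne_of_gt hD) ?_
  have key : C (933120*(g:ℚ) + 16547328*(g:ℚ)^2 + 87780672*(g:ℚ)^3 + 238165056*(g:ℚ)^4 + 398523456*(g:ℚ)^5 + 440717760*(g:ℚ)^6 + 326166912*(g:ℚ)^7 + 158505984*(g:ℚ)^8 + 48190464*(g:ℚ)^9 + 8266752*(g:ℚ)^10 + 608256*(g:ℚ)^11) * (a2'^2 * a3') - C ((-4320)*(g:ℚ)^2 + 6458112*(g:ℚ)^3 + 108728616*(g:ℚ)^4 + 494328872*(g:ℚ)^5 + 1045994280*(g:ℚ)^6 + 1238448792*(g:ℚ)^7 + 887175696*(g:ℚ)^8 + 393926208*(g:ℚ)^9 + 106179840*(g:ℚ)^10 + 15934336*(g:ℚ)^11 + 1022208*(g:ℚ)^12)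 * a3' ^ 2 =
      (C 0 * a1 + C (1924560 + (-2412288216)*(g:ℚ) + (-10579435596)*(g:ℚ)^2 + (-17816307102)*(g:ℚ)^3 + (-13551913440)*(g:ℚ)^4 + (-2541364362)*(g:ℚ)^5 + 3352787868*(g:ℚ)^6 + 2810640912*(g:ℚ)^7 + 971303520*(g:ℚ)^8 + 165309408*(g:ℚ)^9 + 11360448*(g:ℚ)^10) * a2') * r1 g
      + (C ((-534600) + 670222620*(g:ℚ) + 2759949054*(g:ℚ)^2 + 4284501003*(g:ℚ)^3 + 2887676076*(g:ℚ)^4 + 286585321*(g:ℚ)^5 + (-840013026)*(g:ℚ)^6 + (-593256888)*(g:ℚ)^7 + (-186595376)*(g:ℚ)^8 + (-29444976)*(g:ℚ)^9 + (-1893408)*(g:ℚ)^10) * a1 + C ((-233280) + 292167648*(g:ℚ) + 1571865264*(g:ℚ)^2 + 3347969112*(g:ℚ)^3 + 3785590944*(g:ℚ)^4 + 2530679256*(g:ℚ)^5 + 1036876896*(g:ℚ)^6 + 256451328*(g:ℚ)^7 + 35220096*(g:ℚ)^8 + 2065536*(g:ℚ)^9) * a2') * r2 g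
      + (C (6480 + (-8115768)*(g:ℚ) + (-43662924)*(g:ℚ)^2 + (-92999142)*(g:ℚ)^3 + (-105155304)*(g:ℚ)^4 + (-70296646)*(g:ℚ)^5 + (-28802136)*(g:ℚ)^6 + (-7123648)*(g:ℚ)^7 + (-978336)*(g:ℚ)^8 + (-57376)*(g:ℚ)^9) * a1 + C 0 * a2') * r3 g
      + C (36 + (-54252)*(g:ℚ) + (-251863)*(g:ℚ)^2 + (-429342)*(g:ℚ)^3 + (-354397)*(g:ℚ)^4 + (-153114)*(g:ℚ)^5 + (-33388)*(g:ℚ)^6 + (-2904)*(g:ℚ)^7) * r4 g := by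
    simp only [r1, r2, r3, r4, a1, a2', a3', map_add, map_sub, map_mul, map_pow,
      map_neg, map_one, map_zero, map_ofNat]
    ring
  rw [key]
  exact cert_mem g _ _ _ _


lemma weight_eq (d : Fin 3 →₀ ℕ) :
    Finsupp.weight wt d = d 0 * 1 + d 1 * 1 + d 2 * 2 := by
  rw [Finsupp.weight_apply, Finsupp.sum_fintype _ _ (fun i => by simp)]
  simp [Fin.sum_univ_three, wt, mul_comm]

lemma hom_y4 : (a2' ^ 4 : R3) ∈ weightedHomogeneousSubmodule ℚ wt 4 := by
  rw [mem_weightedHomogeneousSubmodule]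
  have h1 := isWeightedHomogeneous_X ℚ wt 1
  have h := ((h1.mul h1).mul h1).mul h1
  have he : (a2' ^ 4 : R3) = X 1 * X 1 * X 1 * X 1 := by rw [a2']; ring
  rw [he]
  simpa [wt] using h

lemma hom_z2 : (a3' ^ 2 : R3) ∈ weightedHomogeneousSubmodule ℚ wt 4 := by
  rw [mem_weightedHomogeneousSubmodule]
  have h1 := isWeightedHomogeneous_X ℚ wt 2
  have h := h1.mul h1
  have he : (a3' ^ 2 : R3) = X 2 * X 2 := by rw [a3']; ring
  rw [he]
  simpa [wt] using h

set_option maxHeartbeats 1000000 in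
lemma span_eq (g : ℤ) (hg : g > 28) :
    QComp g 4 = Submodule.span ℚ ({Qmk g (a2' ^ 4), Qmk g (a3' ^ 2)} : Set (R3 ⧸ Ig g)) := by
  apply le_antisymm
  · have hV : (weightedHomogeneousSubmodule ℚ wt 4 : Submodule ℚ R3)
        = Submodule.span ℚ ((fun d => AddMonoidAlgebra.single d (1:ℚ)) '' {d | Finsupp.weight wt d = 4}) := by
      rw [weightedHomogeneousSubmodule_eq_finsupp_supported, AddMonoidAlgebra.supported_eq_span_single]
    rw [QComp, hV, Submodule.map_span, Submodule.span_le]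
    rintro x ⟨y, ⟨d, hd, rfl⟩, rfl⟩
    have hw : d 0 * 1 + d 1 * 1 + d 2 * 2 = 4 := by
      rw [← weight_eq d]; exact hd
    have hde : (AddMonoidAlgebra.single d (1:ℚ) : R3) = monomial (ee (d 0) (d 1) (d 2)) 1 := by
      rw [single_eq_monomial, ← ee_self d]
    dsimp only
    rw [SetLike.mem_coe, hde]
    clear hd hde
    generalize hp : d 0 = p at hw
    generalize hq : d 1 = q at hw
    generalize hs : d 2 = s at hw
    have hs' : s ≤ 2 := by omega
    have hp' : p ≤ 4 := by omega
    interval_cases s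
    · interval_cases p
      · obtain rfl : q = 4 := by omega
        rw [← y4_mono]; exact Submodule.subset_span (by simp)
      · obtain rfl : q = 3 := by omega
        simpa [mono_eq] using span_m130 g hg
      · obtain rfl : q = 2 := by omega
        simpa [mono_eq] using span_m220 g hg
      · obtain rfl : q = 1 := by omega
        simpa [mono_eq] using span_m310 g hg
      · obtain rfl : q = 0 := by omega
        simpa [mono_eq] using span_m400 g hg
    · interval_cases p
      · obtain rfl : q = 2 := by omega
        simpa [mono_eq] using span_m021 g hg
      · obtain rfl : q = 1 := by omega
        simpa [mono_eq] using span_m111 g hg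
      · obtain rfl : q = 0 := by omega
        simpa [mono_eq] using span_m201 g hg
      · exact absurd hw (by omega)
      · exact absurd hw (by omega)
    · interval_cases p
      · obtain rfl : q = 0 := by omega
        rw [← z2_mono]; exact Submodule.subset_span (by simp)
      · exact absurd hw (by omega)
      · exact absurd hw (by omega)
      · exact absurd hw (by omega)
      · exact absurd hw (by omega)
  · rw [Submodule.span_le]
    rintro x (rfl | rfl)
    · exact Submodule.mem_map_of_mem hom_y4
    · exact Submodule.mem_map_of_mem hom_z2


theorem basis_QComp_four (g : ℤ) (hg : g > 28) :
    LinearIndependent ℚ ![Qmk g (a2'^4), Qmk g (a3'^2)] ∧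
    QComp g 4 = Submodule.span ℚ {Qmk g (a2'^4), Qmk g (a3'^2)} ∧
    Module.finrank ℚ (QComp g 4) = 2 := by
  have hli := indep g hg
  have hsp := span_eq g hg
  refine ⟨hli, hsp, ?_⟩
  have hrange : Set.range ![Qmk g (a2' ^ 4), Qmk g (a3' ^ 2)]
      = ({Qmk g (a2' ^ 4), Qmk g (a3' ^ 2)} : Set (R3 ⧸ Ig g)) := by
    ext x
    simp only [Matrix.range_cons, Matrix.range_empty, Set.union_empty, Set.mem_union,
      Set.mem_singleton_iff, Set.mem_insert_iff]
    try tauto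
  rw [hsp, ← hrange, finrank_span_eq_card hli, Fintype.card_fin]

end
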